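/- Let φ : ℝ → ℝ be C², let 0 ≤ ξ ≤ 1/4, let I be an open interval of length Γ > 0, and set T(λ) = (1−2ξ)(φ')² − 2ξφφ''. Then sup_{λ∈I} T(λ) ≥ −(2ξπ²/Γ²) · (sup_{λ∈I} |φ(λ)|)², assuming φ is bounded on I. -/

import Mathlib

open MeasureTheory Real

theorem stmt_9 (φ : ℝ → ℝ) (hφ : ContDiff ℝ 2 φ) (ξ : ℝ) (hξ0 : 0 ≤ ξ) (hξ1 : ξ ≤ 1/4)
    (a b : ℝ) (Γ : ℝ) (hΓ : Γ = b - a) (hΓpos : 0 < Γ)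
    (hbd : ∃ M, ∀ l ∈ Set.Ioo a b, |φ l| ≤ M)
    (T : ℝ → ℝ)
    (hT : ∀ l, T l = (1 - 2*ξ) * (deriv φ l)^2 - 2 * ξ * φ l * deriv (deriv φ) l) :
    sSup (T '' Set.Ioo a b)
      ≥ -(2 * ξ * π^2 / Γ^2) * (sSup ((fun l => |φ l|) '' Set.Ioo a b))^2 := by
  have hab : a < b := by linarith [hΓpos, hΓ.symm.le]
  have hne : (Set.Ioo a b).Nonempty := Set.nonempty_Ioo.mpr hab
  -- S = sup of |φ|
  set S : ℝ := sSup ((fun l => |φ l|) '' Set.Ioo a b) with hS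
  have hSbdd : BddAbove ((fun l => |φ l|) '' Set.Ioo a b) := by
    obtain ⟨M, hM⟩ := hbd
    exact ⟨M, by rintro _ ⟨l, hl, rfl⟩; exact hM l hl⟩
  have hSle : ∀ l ∈ Set.Ioo a b, |φ l| ≤ S :=
    fun l hl => le_csSup hSbdd ⟨l, hl, rfl⟩
  have hS0 : 0 ≤ S := by
    obtain ⟨l, hl⟩ := hne
    exact le_trans (abs_nonneg _) (hSle l hl)
  have hπ : (0:ℝ) < π := Real.pi_pos
  by_cases hTb : BddAbove (T '' Set.Ioo a b)
  swap
  · rw [Real.sSup_of_not_bddAbove hTb]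
    have h1 : 0 ≤ 2 * ξ * π^2 / Γ^2 := by positivity
    nlinarith [sq_nonneg S]
  set M : ℝ := sSup (T '' Set.Ioo a b) with hM
  have hMle : ∀ l ∈ Set.Ioo a b, T l ≤ M :=
    fun l hl => le_csSup hTb ⟨l, hl, rfl⟩
  -- |φ| ≤ S on the closed interval, by continuity
  have hScc : ∀ x ∈ Set.Icc a b, |φ x| ≤ S := by
    have hclosed : IsClosed {x : ℝ | |φ x| ≤ S} :=
      isClosed_le hφ.continuous.abs continuous_const
    have hsub : Set.Icc a b ⊆ {x : ℝ | |φ x| ≤ S} := by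
      rw [← closure_Ioo hab.ne]
      exact closure_minimal hSle hclosed
    exact fun x hx => hsub hx
  -- smoothness facts
  have hφ1 : ContDiff ℝ 1 (deriv φ) := by
    have : ContDiff ℝ (1+1) φ := by norm_num; exact hφ
    exact (contDiff_succ_iff_deriv.mp this).2.2
  have hφc : Continuous φ := hφ.continuous
  have hφ'c : Continuous (deriv φ) := hφ1.continuous
  have hφ''c : Continuous (deriv (deriv φ)) := hφ1.continuous_deriv le_rfl
  have hφd : ∀ x, HasDerivAt φ (deriv φ x) x :=
    fun x => (hφ.differentiable two_ne_zero x).hasDerivAt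
  have hφd' : ∀ x, HasDerivAt (deriv φ) (deriv (deriv φ) x) x :=
    fun x => (hφ1.differentiable one_ne_zero x).hasDerivAt
  have hTc : Continuous T := by
    have : T = fun l => (1 - 2*ξ) * (deriv φ l)^2 - 2 * ξ * φ l * deriv (deriv φ) l :=
      funext hT
    rw [this]; fun_prop
  -- test function
  set c : ℝ := π / Γ with hc
  have hcpos : 0 < c := by positivity
  have hcΓ : c * Γ = π := by rw [hc]; field_simp
  set f : ℝ → ℝ := fun x => Real.sin (c * (x - a)) with hf
  set fd : ℝ → ℝ := fun x => c * Real.cos (c * (x - a)) with hfd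
  have hfderiv : ∀ x, HasDerivAt f (fd x) x := by
    intro x
    have h1 : HasDerivAt (fun x : ℝ => c * (x - a)) c x := by
      simpa using ((hasDerivAt_id x).sub_const a).const_mul c
    exact ((Real.hasDerivAt_sin (c * (x - a))).comp x h1).congr_deriv (mul_comm _ _)
  have hfc : Continuous f := by fun_prop
  have hfdc : Continuous fd := by fun_prop
  have hfa : f a = 0 := by simp [hf]
  have hfb : f b = 0 := by
    have hba : c * (b - a) = π := by rw [← hΓ]; exact hcΓ
    simp [hf, hba]
  -- the FTC identity
  set w : ℝ → ℝ := fun x => 2 * ξ * φ x * deriv φ x * (f x)^2 with hw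
  set g1 : ℝ → ℝ := fun x => (deriv φ x * f x + 2*ξ*φ x * fd x)^2 with hg1
  set g2 : ℝ → ℝ := fun x => 4*ξ^2*(φ x)^2*(fd x)^2 with hg2
  set g3 : ℝ → ℝ := fun x => T x * (f x)^2 with hg3
  set E : ℝ → ℝ := fun x => g1 x - g2 x - g3 x with hE
  have hwderiv : ∀ x, HasDerivAt w (E x) x := by
    intro x
    have h : HasDerivAt w _ x := ((((hφd x).const_mul (2*ξ)).mul (hφd' x)).mul ((hfderiv x).pow 2))
    convert h using 1
    simp only [hE, hg1, hg2, hg3, hT x, Pi.mul_apply, Pi.pow_apply]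
    norm_num
    ring
  have hg1c : Continuous g1 := by fun_prop
  have hg2c : Continuous g2 := by fun_prop
  have hg3c : Continuous g3 := by fun_prop
  have hEc : Continuous E := by rw [hE]; fun_prop
  have hint : ∫ x in a..b, E x = 0 := by
    rw [intervalIntegral.integral_eq_sub_of_hasDerivAt (fun x _ => hwderiv x)
      (hEc.intervalIntegrable a b)]
    simp [hw, hfa, hfb]
  have hsplit : (∫ x in a..b, g1 x) - (∫ x in a..b, g2 x) - (∫ x in a..b, g3 x) = 0 := by
    rw [← intervalIntegral.integral_sub (hg1c.intervalIntegrable a b)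
      (hg2c.intervalIntegrable a b),
      ← intervalIntegral.integral_sub (f := fun x => g1 x - g2 x) ((hg1c.sub hg2c).intervalIntegrable a b)
      (hg3c.intervalIntegrable a b)]
    exact hint
  -- integral computations
  have hIcos : ∫ x in a..b, Real.cos (c*(x-a))^2 = Γ/2 := by
    rw [intervalIntegral.integral_comp_sub_right (fun x => Real.cos (c*x)^2) a,
      intervalIntegral.integral_comp_mul_left (fun x => Real.cos x^2) (ne_of_gt hcpos),
      integral_cos_sq]
    rw [sub_self, mul_zero, show c * (b - a) = π by rw [← hΓ]; exact hcΓ]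
    simp [smul_eq_mul]
    rw [hc, inv_div]
    field_simp
  have hIsin : ∫ x in a..b, Real.sin (c*(x-a))^2 = Γ/2 := by
    rw [intervalIntegral.integral_comp_sub_right (fun x => Real.sin (c*x)^2) a,
      intervalIntegral.integral_comp_mul_left (fun x => Real.sin x^2) (ne_of_gt hcpos),
      integral_sin_sq]
    rw [sub_self, mul_zero, show c * (b - a) = π by rw [← hΓ]; exact hcΓ]
    simp [smul_eq_mul]
    rw [hc, inv_div]
    field_simp
  have hIf : ∫ x in a..b, (f x)^2 = Γ/2 := hIsin
  have hIfd : ∫ x in a..b, (fd x)^2 = c^2 * (Γ/2) := by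
    simp only [hfd, mul_pow]
    rw [intervalIntegral.integral_const_mul, hIcos]
  -- bounds
  have h1 : 0 ≤ ∫ x in a..b, g1 x :=
    intervalIntegral.integral_nonneg hab.le (fun x _ => sq_nonneg _)
  have h2 : (∫ x in a..b, g2 x) ≤ 4*ξ^2*S^2 * (c^2 * (Γ/2)) := by
    have hmono : (∫ x in a..b, g2 x) ≤ ∫ x in a..b, 4*ξ^2*S^2 * (fd x)^2 := by
      apply intervalIntegral.integral_mono_on hab.le (hg2c.intervalIntegrable a b)
        ((continuous_const.mul (hfdc.pow 2)).intervalIntegrable a b)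
      intro x hx
      have hx2 : |φ x| ≤ S := hScc x hx
      have : (φ x)^2 ≤ S^2 := by
        rw [← sq_abs]; exact pow_le_pow_left₀ (abs_nonneg _) hx2 2
      simp only [hg2, Pi.mul_apply, Pi.pow_apply]
      nlinarith [mul_le_mul_of_nonneg_left (mul_le_mul_of_nonneg_right this
        (sq_nonneg (fd x))) (by positivity : (0:ℝ) ≤ 4*ξ^2)]
    rw [intervalIntegral.integral_const_mul, hIfd] at hmono
    exact hmono
  have h3 : (∫ x in a..b, g3 x) ≤ M * (Γ/2) := by
    have hmono : (∫ x in a..b, g3 x) ≤ ∫ x in a..b, M * (f x)^2 := by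
      apply intervalIntegral.integral_mono_on hab.le (hg3c.intervalIntegrable a b)
        ((continuous_const.mul (hfc.pow 2)).intervalIntegrable a b)
      intro x hx
      rcases eq_or_lt_of_le hx.1 with h | h
      · simp only [hg3, ← h, hfa, Pi.mul_apply, Pi.pow_apply]; ring_nf; rfl
      rcases eq_or_lt_of_le hx.2 with h' | h'
      · simp only [hg3, h', hfb, Pi.mul_apply, Pi.pow_apply]; ring_nf; rfl
      · exact mul_le_mul_of_nonneg_right (hMle x ⟨h, h'⟩) (sq_nonneg _)
    rw [intervalIntegral.integral_const_mul, hIf] at hmono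
    exact hmono
  -- combine
  have key : -(4*ξ^2*S^2) * (c^2 * (Γ/2)) ≤ M * (Γ/2) := by linarith
  have key2 : -(4*ξ^2*S^2) * π^2 ≤ M * Γ^2 := by
    have h := mul_le_mul_of_nonneg_right key (by positivity : (0:ℝ) ≤ 2*Γ)
    have e1 : -(4*ξ^2*S^2) * (c^2 * (Γ/2)) * (2*Γ) = -(4*ξ^2*S^2) * (c*Γ)^2 := by ring
    have e2 : M * (Γ/2) * (2*Γ) = M * Γ^2 := by ring
    rw [e1, e2, hcΓ] at h
    exact h
  have h4 : -(2*ξ*π^2) * S^2 ≤ M * Γ^2 := by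
    nlinarith [mul_nonneg (mul_nonneg hξ0 (by linarith : (0:ℝ) ≤ 1 - 2*ξ))
      (mul_nonneg (sq_nonneg π) (sq_nonneg S))]
  have hΓ2 : (0:ℝ) < Γ^2 := by positivity
  calc -(2 * ξ * π^2 / Γ^2) * S^2 = (-(2*ξ*π^2) * S^2) / Γ^2 := by ring
    _ ≤ (M * Γ^2) / Γ^2 := by apply div_le_div_of_nonneg_right h4 hΓ2.le
    _ = M := by field_simp
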